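/- arXiv:1012.5912 — 3 statements merged into one kernel-verified Lean document; each statement's English description precedes it below -/
import Mathlib

section
/- For imaginary octonions u and v, the norm of the cross product satisfies |u × v|² = |u|²|v|² − ⟨u,v⟩². -/
set_option maxRecDepth 10000
set_option maxHeartbeats 1000000


noncomputable section

/-- The octonions as Cayley–Dickson pairs of quaternions. -/
abbrev Octonion := Quaternion ℝ × Quaternion ℝ

/-- Cayley–Dickson multiplication. -/
def omul (x y : Octonion) : Octonion :=
  (x.1 * y.1 - star y.2 * x.2, y.2 * x.1 + x.2 * star y.1)

/-- Octonion conjugation. -/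
def oconj (x : Octonion) : Octonion := (star x.1, -x.2)

/-- Real part, identified with a real number. -/
def oRe (x : Octonion) : ℝ := x.1.re

/-- Imaginary part `(x - conj x)/2`. -/
def oIm (x : Octonion) : Octonion := (2 : ℝ)⁻¹ • (x - oconj x)

/-- The inner product `⟨x,y⟩ = Re (x · conj y)`. -/
def oInner (x y : Octonion) : ℝ := oRe (omul x (oconj y))

/-- The cross product `u × v = Im (conj v · u)` of imaginary octonions. -/
def ocross (u v : Octonion) : Octonion := oIm (omul (oconj v) u)

/-- The associator `[x,y,z] = ((x·y)·z - x·(y·z))/2`. -/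
def oAssoc (x y z : Octonion) : Octonion :=
  (2 : ℝ)⁻¹ • (omul (omul x y) z - omul x (omul y z))

theorem ocross_norm_sq (u v : Octonion) (hu : oconj u = -u) (hv : oconj v = -v) :
    oInner (ocross u v) (ocross u v) = oInner u u * oInner v v - (oInner u v) ^ 2 := by
  have hu1 : u.1.re = 0 := by
    have := congrArg (fun x : Octonion => x.1.re) hu
    simp [oconj] at this; linarith
  have hv1 : v.1.re = 0 := by
    have := congrArg (fun x : Octonion => x.1.re) hv
    simp [oconj] at this; linarith
  obtain ⟨a, b⟩ := u
  obtain ⟨c, d⟩ := v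
  simp only [oInner, ocross, oIm, omul, oconj, oRe] at *
  simp only [Prod.smul_fst, Prod.smul_snd, Prod.fst_sub, Prod.snd_sub, Prod.fst_neg,
    Prod.snd_neg, Quaternion.re_smul, Quaternion.re_sub, Quaternion.re_neg,
    Quaternion.re_mul, Quaternion.imI_mul, Quaternion.imJ_mul, Quaternion.imK_mul,
    Quaternion.re_star, Quaternion.imI_star, Quaternion.imJ_star, Quaternion.imK_star,
    Quaternion.imI_smul, Quaternion.imJ_smul, Quaternion.imK_smul,
    Quaternion.imI_sub, Quaternion.imJ_sub, Quaternion.imK_sub,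
    Quaternion.re_add, Quaternion.imI_add, Quaternion.imJ_add, Quaternion.imK_add,
    Quaternion.imI_neg, Quaternion.imJ_neg, Quaternion.imK_neg, smul_eq_mul] at *
  rw [hu1, hv1]
  ring
end
end

section
/- The trilinear form φ₀(u,v,w) := ⟨u × v, w⟩ on the imaginary octonions is totally antisymmetric (alternating): it changes sign under swapping any two of its arguments. -/
noncomputable section

theorem phi0_alternating (u v w : Octonion)
    (hu : oconj u = -u) (hv : oconj v = -v) (hw : oconj w = -w) :
    oInner (ocross v u) w = -oInner (ocross u v) w ∧
    oInner (ocross u w) v = -oInner (ocross u v) w ∧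
    oInner (ocross w v) u = -oInner (ocross u v) w := by
  obtain ⟨u1, u2⟩ := u
  obtain ⟨v1, v2⟩ := v
  obtain ⟨w1, w2⟩ := w
  simp only [oconj, Prod.mk.injEq, Prod.neg_mk, neg_neg] at hu hv hw
  have hu1 : u1.re = 0 := by
    have := congrArg QuaternionAlgebra.re hu.1; simp at this; linarith
  have hv1 : v1.re = 0 := by
    have := congrArg QuaternionAlgebra.re hv.1; simp at this; linarith
  have hw1 : w1.re = 0 := by
    have := congrArg QuaternionAlgebra.re hw.1; simp at this; linarith
  simp only [oInner, ocross, oIm, omul, oconj, oRe, Prod.smul_mk, Prod.mk_sub_mk,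
    Prod.mk_mul_mk, Quaternion.re_smul, Quaternion.re_sub,
    Quaternion.re_mul, Quaternion.re_star, Quaternion.imI_star,
    Quaternion.imJ_star, Quaternion.imK_star, Quaternion.imI_smul,
    Quaternion.imJ_smul, Quaternion.imK_smul, Quaternion.imI_sub,
    Quaternion.imJ_sub, Quaternion.imK_sub, Quaternion.imI_mul,
    Quaternion.imJ_mul, Quaternion.imK_mul, Quaternion.re_neg,
    Quaternion.imI_neg, Quaternion.imJ_neg, Quaternion.imK_neg,
    Quaternion.re_add, Quaternion.imI_add, Quaternion.imJ_add, Quaternion.imK_add,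
    smul_eq_mul, hu1, hv1, hw1]
  refine ⟨by ring, by ring, by ring⟩
end
end

section
/- The octonions are a normed algebra: for all octonions x, y, |x·y| = |x|·|y|, where |x|² = Re(x·conj x). -/
noncomputable section

/-- The norm `|x| = √(Re (x · conj x))`. -/
noncomputable def onorm (x : Octonion) : ℝ := Real.sqrt (oRe (omul x (oconj x)))

open Quaternion in
lemma octo_key (a b c d : Quaternion ℝ) :
    normSq (a*c - star d * b) + normSq (d*a + b*star c) =
    (normSq a + normSq b) * (normSq c + normSq d) := by
  simp only [normSq_def', re_sub, imI_sub, imJ_sub, imK_sub, re_add, imI_add, imJ_add, imK_add,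
    re_mul, imI_mul, imJ_mul, imK_mul, re_star, imI_star, imJ_star, imK_star]
  ring

open Quaternion in
lemma oRe_omul_oconj_self (z : Octonion) :
    oRe (omul z (oconj z)) = normSq z.1 + normSq z.2 := by
  simp [omul, oconj, oRe, normSq_def, star_mul]

theorem octonion_normed (x y : Octonion) : onorm (omul x y) = onorm x * onorm y := by
  unfold onorm
  rw [oRe_omul_oconj_self, oRe_omul_oconj_self, oRe_omul_oconj_self,
    ← Real.sqrt_mul (add_nonneg Quaternion.normSq_nonneg Quaternion.normSq_nonneg), ← octo_key]
  rfl
end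
end
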